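/- Let X be a topological space, F: X → X a homeomorphism, D ⊂ X open with F(D) ⊂ D, and C ⊂ X with F(C) ⊂ C, C ∩ D = ∅, and F^K(C) ⊂ ∂D for some K ≥ 0. Set Ω = ⋃_{n≥0} F^{−n}(D) and Γ = ⋃_{n≥0} F^{−n}(C). Then Γ ⊂ ∂Ω. -/

import Mathlib

private theorem iter_image_sub' {X : Type*} {F : X → X} {C : Set X} (h : F '' C ⊆ C) :
    ∀ n, F^[n] '' C ⊆ C := by
  intro n
  induction n with
  | zero => simp
  | succ k ih =>
    rw [Function.iterate_succ', Set.image_comp]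
    exact (Set.image_mono ih).trans h

private theorem iter_preimage_closure' {X : Type*} [TopologicalSpace X] (F : X ≃ₜ X)
    (s : Set X) : ∀ n, (⇑F)^[n] ⁻¹' closure s = closure ((⇑F)^[n] ⁻¹' s) := by
  intro n
  induction n with
  | zero => simp
  | succ k ih =>
    rw [Function.iterate_succ, Set.preimage_comp, Set.preimage_comp, ih,
      F.preimage_closure]

/-- If `F` is a homeomorphism, `D` open and forward invariant, `C` forward
invariant, disjoint from `D`, with `F^K(C) ⊂ ∂D`, then
`Γ = ⋃ F^{−n}(C)` is contained in the boundary of `Ω = ⋃ F^{−n}(D)`. -/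
theorem saturation_subset_frontier {X : Type*} [TopologicalSpace X]
    (F : X ≃ₜ X) (D C : Set X) (hDopen : IsOpen D)
    (hFD : (⇑F) '' D ⊆ D) (hFC : (⇑F) '' C ⊆ C) (hdisj : C ∩ D = ∅)
    (K : ℕ) (hK : (⇑F)^[K] '' C ⊆ frontier D) :
    (⋃ n : ℕ, (⇑F)^[n] ⁻¹' C) ⊆ frontier (⋃ n : ℕ, (⇑F)^[n] ⁻¹' D) := by
  intro x hx
  obtain ⟨_, ⟨n, rfl⟩, hn⟩ := hx
  have hΩopen : IsOpen (⋃ n : ℕ, (⇑F)^[n] ⁻¹' D) :=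
    isOpen_iUnion fun m => hDopen.preimage (F.continuous.iterate m)
  rw [hΩopen.frontier_eq]
  constructor
  · apply closure_mono (Set.subset_iUnion (fun m => (⇑F)^[m] ⁻¹' D) (K + n))
    rw [← iter_preimage_closure']
    have h1 : (⇑F)^[K] ((⇑F)^[n] x) ∈ frontier D := hK ⟨_, hn, rfl⟩
    rw [← Function.iterate_add_apply] at h1
    exact frontier_subset_closure h1
  · rintro ⟨_, ⟨m, rfl⟩, hm⟩
    rcases le_total n m with h | h
    · have hmem : (⇑F)^[m] x ∈ C := by
        have := iter_image_sub' hFC (m - n) ⟨_, hn, rfl⟩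
        rwa [← Function.iterate_add_apply, Nat.sub_add_cancel h] at this
      exact Set.eq_empty_iff_forall_notMem.mp hdisj _ ⟨hmem, hm⟩
    · have hmem : (⇑F)^[n] x ∈ D := by
        have := iter_image_sub' hFD (n - m) ⟨_, hm, rfl⟩
        rwa [← Function.iterate_add_apply, Nat.sub_add_cancel h] at this
      exact Set.eq_empty_iff_forall_notMem.mp hdisj _ ⟨hn, hmem⟩
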